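/- Let X and Y be real Banach spaces, let L : X → Y and R : Y → X be continuous linear maps with L ∘ R = id_Y, let c₀ > 0 satisfy ‖R‖ ≤ c₀, let ε > 0 and k ≥ 0 satisfy 4 k c₀² ε < 1, let Q be a map from the closed ball B̄(0, 2c₀ε) in X to Y with Q(0) = 0 and ‖Q(x) − Q(x')‖ ≤ k ‖x − x'‖ (‖x‖ + ‖x'‖) for all x, x' ∈ B̄(0, 2c₀ε), and let y₀ ∈ Y satisfy ‖y₀‖ ≤ ε. Then there exists v ∈ Y with ‖v‖ ≤ 2ε such that the element x := R v satisfies y₀ + L x + Q(x) = 0; in particular ‖x‖ ≤ 2 c₀ ε. -/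

import Mathlib

open Metric

/-- Banach fixed-point scheme solving `y₀ + L x + Q x = 0` with `x = R v` in the range of
the bounded right inverse `R`, for a quadratically small nonlinearity `Q`. -/
theorem stmt_7
    {X Y : Type*} [NormedAddCommGroup X] [NormedSpace ℝ X] [CompleteSpace X]
    [NormedAddCommGroup Y] [NormedSpace ℝ Y] [CompleteSpace Y]
    (L : X →L[ℝ] Y) (R : Y →L[ℝ] X)
    (hLR : L.comp R = ContinuousLinearMap.id ℝ Y)
    (c₀ : ℝ) (hc₀ : 0 < c₀) (hR : ‖R‖ ≤ c₀)
    (ε k : ℝ) (hε : 0 < ε) (hk : 0 ≤ k)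
    (hsmall : 4 * k * c₀ ^ 2 * ε < 1)
    (Q : X → Y) (hQ0 : Q 0 = 0)
    (hQ : ∀ x ∈ closedBall (0 : X) (2 * c₀ * ε), ∀ x' ∈ closedBall (0 : X) (2 * c₀ * ε),
      ‖Q x - Q x'‖ ≤ k * ‖x - x'‖ * (‖x‖ + ‖x'‖))
    (y₀ : Y) (hy₀ : ‖y₀‖ ≤ ε) :
    ∃ v : Y, ‖v‖ ≤ 2 * ε ∧ y₀ + L (R v) + Q (R v) = 0 ∧ ‖R v‖ ≤ 2 * c₀ * ε := by
  set α := closedBall (0 : Y) (2 * ε)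
  -- key estimate: R maps the ball into the X-ball
  have hball : ∀ v : Y, ‖v‖ ≤ 2 * ε → R v ∈ closedBall (0 : X) (2 * c₀ * ε) := by
    intro v hv
    rw [mem_closedBall, dist_zero_right]
    calc ‖R v‖ ≤ ‖R‖ * ‖v‖ := R.le_opNorm v
      _ ≤ c₀ * (2 * ε) := by
        apply mul_le_mul hR hv (norm_nonneg v) (le_of_lt hc₀)
      _ = 2 * c₀ * ε := by ring
  have hKnn : (0:ℝ) ≤ 4 * k * c₀ ^ 2 * ε := by positivity
  -- the map T preserves the ball
  have hmaps : ∀ v : Y, ‖v‖ ≤ 2 * ε → ‖-y₀ - Q (R v)‖ ≤ 2 * ε := by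
    intro v hv
    have h0 : (0:X) ∈ closedBall (0 : X) (2 * c₀ * ε) := by
      simp [mem_closedBall]; positivity
    have hQv := hQ (R v) (hball v hv) 0 h0
    rw [hQ0, sub_zero, norm_zero, add_zero, sub_zero] at hQv
    have hRv : ‖R v‖ ≤ 2 * c₀ * ε := by
      have := hball v hv; rwa [mem_closedBall, dist_zero_right] at this
    have h1 : ‖Q (R v)‖ ≤ k * (2 * c₀ * ε) * (2 * c₀ * ε) := by
      refine hQv.trans ?_
      apply mul_le_mul (by apply mul_le_mul_of_nonneg_left hRv hk) hRv (norm_nonneg _)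
      positivity
    have h2 : k * (2 * c₀ * ε) * (2 * c₀ * ε) = (4 * k * c₀ ^ 2 * ε) * ε := by ring
    have h3 : (4 * k * c₀ ^ 2 * ε) * ε ≤ 1 * ε :=
      mul_le_mul_of_nonneg_right hsmall.le hε.le
    calc ‖-y₀ - Q (R v)‖ ≤ ‖-y₀‖ + ‖Q (R v)‖ := norm_sub_le _ _
      _ ≤ ε + 1 * ε := by
        rw [norm_neg]
        exact add_le_add hy₀ ((h1.trans (h2 ▸ h3)))
      _ = 2 * ε := by ring
  haveI : CompleteSpace α := isClosed_closedBall.completeSpace_coe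
  have hne : Nonempty α := ⟨⟨0, by simp [α, mem_closedBall]; positivity⟩⟩
  set K : NNReal := ⟨4 * k * c₀ ^ 2 * ε, hKnn⟩
  let f : α → α := fun v => ⟨-y₀ - Q (R v),
    by rw [mem_closedBall, dist_zero_right]
       exact hmaps v (by have := v.2; rwa [mem_closedBall, dist_zero_right] at this)⟩
  have hlip : LipschitzWith K f := by
    apply LipschitzWith.of_dist_le_mul
    rintro ⟨v, hv⟩ ⟨w, hw⟩
    rw [mem_closedBall, dist_zero_right] at hv hw
    simp only [f, Subtype.dist_eq, dist_eq_norm]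
    have h1 := hQ (R w) (hball w hw) (R v) (hball v hv)
    have hRv : ‖R v‖ ≤ 2 * c₀ * ε := by
      have := hball v hv; rwa [mem_closedBall, dist_zero_right] at this
    have hRw : ‖R w‖ ≤ 2 * c₀ * ε := by
      have := hball w hw; rwa [mem_closedBall, dist_zero_right] at this
    have e1 : -y₀ - Q (R v) - (-y₀ - Q (R w)) = Q (R w) - Q (R v) := by abel
    rw [e1]
    have h2 : ‖R w - R v‖ ≤ c₀ * ‖w - v‖ := by
      rw [← map_sub]
      calc ‖R (w - v)‖ ≤ ‖R‖ * ‖w - v‖ := R.le_opNorm _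
        _ ≤ c₀ * ‖w - v‖ := mul_le_mul_of_nonneg_right hR (norm_nonneg _)
    calc ‖Q (R w) - Q (R v)‖ ≤ k * ‖R w - R v‖ * (‖R w‖ + ‖R v‖) := h1
      _ ≤ k * (c₀ * ‖w - v‖) * (2 * c₀ * ε + 2 * c₀ * ε) := by
        apply mul_le_mul (mul_le_mul_of_nonneg_left h2 hk) (add_le_add hRw hRv)
          (by positivity) (by positivity)
      _ = (4 * k * c₀ ^ 2 * ε) * ‖w - v‖ := by ring
      _ = (K : ℝ) * ‖v - w‖ := by rw [norm_sub_rev]; rfl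
  have hKlt : K < 1 := by
    rw [← NNReal.coe_lt_coe]; exact hsmall
  have hcw : ContractingWith K f := ⟨hKlt, hlip⟩
  obtain ⟨⟨v, hv⟩, hfix⟩ : ∃ p : α, f p = p := ⟨hcw.fixedPoint f, hcw.fixedPoint_isFixedPt⟩
  have hv' : ‖v‖ ≤ 2 * ε := by rwa [mem_closedBall, dist_zero_right] at hv
  have hveq : v = -y₀ - Q (R v) := congrArg Subtype.val hfix.symm
  refine ⟨v, hv', ?_, ?_⟩
  · have hLRv : L (R v) = v := by
      have := ContinuousLinearMap.ext_iff.mp hLR v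
      simpa using this
    rw [hLRv]
    nth_rewrite 1 [hveq]
    abel
  · have := hball v hv'; rwa [mem_closedBall, dist_zero_right] at this
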